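/- As formal power series, (q^4;q^4)_∞ · (q^2;q^4)_∞^2 = ∑_{n=-∞}^{∞} (-1)^n q^{2n^2}. -/

import Mathlib

open PowerSeries Finset

variable {R : Type*} [CommRing R]

/-- Gaussian binomial coefficient in the variable `X^4`, with `ℤ`-indexed column
(zero out of range). -/
noncomputable def Gb (R : Type*) [CommRing R] : ℕ → ℤ → R⟦X⟧
  | 0, k => if k = 0 then 1 else 0
  | (n+1), k => Gb R n (k-1) + X ^ (4 * k.toNat) * Gb R n k

lemma Gb_neg (n : ℕ) : ∀ k : ℤ, k < 0 → Gb R n k = 0 := by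
  induction n with
  | zero => intro k hk; simp [Gb, hk.ne]
  | succ n ih =>
    intro k hk
    rw [Gb, ih _ (by omega), ih _ hk]
    ring

lemma Gb_gt (n : ℕ) : ∀ k : ℤ, (n : ℤ) < k → Gb R n k = 0 := by
  induction n with
  | zero => intro k hk; simp [Gb]; omega
  | succ n ih =>
    intro k hk
    rw [Gb, ih _ (by push_cast; omega), ih _ (by push_cast at hk ⊢; omega)]
    ring

lemma Gb_zero (n : ℕ) : Gb R n 0 = 1 := by
  induction n with
  | zero => simp [Gb]
  | succ n ih =>
    rw [Gb, show (0:ℤ)-1 = -1 from rfl, Gb_neg n (-1) (by omega), ih]; simp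

lemma Gb_self (n : ℕ) : Gb R n n = 1 := by
  induction n with
  | zero => simp [Gb]
  | succ n ih =>
    rw [Gb, show ((n+1:ℕ) : ℤ) - 1 = (n:ℤ) by push_cast; ring, ih,
      Gb_gt n ((n+1:ℕ) : ℤ) (by push_cast; omega)]
    ring

lemma Gb_ruleB (n : ℕ) : ∀ k : ℤ, Gb R (n+1) k =
    X ^ (4 * ((n : ℤ) + 1 - k).toNat) * Gb R n (k-1) + Gb R n k := by
  induction n with
  | zero =>
    intro k
    rcases eq_or_ne k 0 with rfl | h0
    · simp [Gb]
    rcases eq_or_ne k 1 with rfl | h1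
    · norm_num [Gb]
    · rw [Gb]
      have h1' : k - 1 ≠ 0 := by omega
      simp [Gb, h0, h1', h1]
  | succ n ih =>
    intro k
    have hA2 : Gb R (n+1) (k-1)
        = Gb R n (k-1-1) + X ^ (4 * (k-1).toNat) * Gb R n (k-1) := rfl
    have hA3 : Gb R (n+1) k = Gb R n (k-1) + X ^ (4 * k.toNat) * Gb R n k := rfl
    have hEF : ((n:ℤ) + 1 - (k-1)).toNat = (((n+1:ℕ):ℤ) + 1 - k).toNat := by
      push_cast; omega
    have L : Gb R (n+1+1) k
        = (X ^ (4 * ((n:ℤ) + 1 - (k-1)).toNat) * Gb R n (k-1-1) + Gb R n (k-1))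
          + X ^ (4 * k.toNat) *
            (X ^ (4 * ((n:ℤ) + 1 - k).toNat) * Gb R n (k-1) + Gb R n k) := by
      rw [show Gb R (n+1+1) k
          = Gb R (n+1) (k-1) + X ^ (4 * k.toNat) * Gb R (n+1) k from rfl,
        ih (k-1), ih k]
    rw [L, hA2, hA3, hEF]
    have key : (X : R⟦X⟧) ^ (4 * k.toNat) * X ^ (4 * ((n:ℤ)+1-k).toNat) * Gb R n (k-1)
        = X ^ (4 * (((n+1:ℕ):ℤ) + 1 - k).toNat) * X ^ (4 * (k-1).toNat) * Gb R n (k-1) := by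
      rcases le_or_gt k 0 with hk | hk
      · rw [Gb_neg n (k-1) (by omega)]; ring
      rcases le_or_gt k ((n:ℤ)+1) with hk2 | hk2
      · rw [← pow_add, ← pow_add]
        have : 4 * k.toNat + 4 * ((n:ℤ) + 1 - k).toNat
            = 4 * (((n+1:ℕ):ℤ) + 1 - k).toNat + 4 * (k-1).toNat := by
          push_cast
          omega
        rw [this]
      · rw [Gb_gt n (k-1) (by omega)]
        ring
    linear_combination key

lemma Gb_dagger (N : ℕ) (k : ℤ) (h1 : -(N:ℤ)-1 ≤ k) (h2 : k ≤ (N:ℤ)+1) :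
    Gb R (2*N+2) ((N:ℤ)+1+k)
      = Gb R (2*N) ((N:ℤ)+k) * (1 + X^(8*N+4))
        + X^(4*((N:ℤ)+1-k).toNat) * Gb R (2*N) ((N:ℤ)+k-1)
        + X^(4*((N:ℤ)+1+k).toNat) * Gb R (2*N) ((N:ℤ)+1+k) := by
  have ruleA : Gb R (2*N+2) ((N:ℤ)+1+k)
      = Gb R (2*N+1) ((N:ℤ)+k) + X^(4*((N:ℤ)+1+k).toNat) * Gb R (2*N+1) ((N:ℤ)+1+k) := by
    rw [show Gb R (2*N+2) ((N:ℤ)+1+k)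
        = Gb R (2*N+1) ((N:ℤ)+1+k-1) + X^(4*((N:ℤ)+1+k).toNat) * Gb R (2*N+1) ((N:ℤ)+1+k)
        from rfl, show (N:ℤ)+1+k-1 = (N:ℤ)+k by ring]
  have hB1 := Gb_ruleB (R := R) (2*N) ((N:ℤ)+k)
  have hB2 := Gb_ruleB (R := R) (2*N) ((N:ℤ)+1+k)
  rw [show ((2*N:ℕ):ℤ) + 1 - ((N:ℤ)+k) = (N:ℤ)+1-k by push_cast; ring,
    show (N:ℤ)+k-1 = (N:ℤ)+k-1 from rfl] at hB1
  rw [show ((2*N:ℕ):ℤ) + 1 - ((N:ℤ)+1+k) = (N:ℤ)-k by push_cast; ring,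
    show (N:ℤ)+1+k-1 = (N:ℤ)+k by ring] at hB2
  rw [ruleA, hB1, hB2]
  have key : (X : R⟦X⟧)^(4*((N:ℤ)+1+k).toNat) * X^(4*((N:ℤ)-k).toNat) * Gb R (2*N) ((N:ℤ)+k)
      = X^(8*N+4) * Gb R (2*N) ((N:ℤ)+k) := by
    rcases le_or_gt k ((N:ℤ)) with hk2 | hk2
    · rcases le_or_gt (-(N:ℤ)) k with hk1 | hk1
      · rw [← pow_add]
        have : 4*((N:ℤ)+1+k).toNat + 4*((N:ℤ)-k).toNat = 8*N+4 := by omega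
        rw [this]
      · rw [Gb_neg (2*N) ((N:ℤ)+k) (by omega)]
        ring
    · rw [Gb_gt (2*N) ((N:ℤ)+k) (by push_cast; omega)]
      ring
  linear_combination key

/-- The partial Euler product `∏_{j=1}^{t} (1 - X^{4j})`. -/
noncomputable def Eu (R : Type*) [CommRing R] (t : ℕ) : R⟦X⟧ :=
  ∏ j ∈ Finset.range t, (1 - X ^ (4*(j+1)))

lemma Eu_succ (t : ℕ) : Eu R (t+1) = Eu R t * (1 - X^(4*(t+1))) := by
  rw [Eu, Finset.prod_range_succ, Eu]

lemma Gb_mul_Eu (n : ℕ) : ∀ a : ℕ, a ≤ n →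
    Gb R n (a:ℤ) * (Eu R a * Eu R (n-a)) = Eu R n := by
  induction n with
  | zero =>
    intro a ha
    interval_cases a
    simp [Gb, Eu]
  | succ n ih =>
    intro a ha
    rcases Nat.eq_zero_or_pos a with rfl | ha0
    · simp only [Nat.cast_zero, Gb_zero, Nat.sub_zero]
      rw [show Eu R 0 = 1 by simp [Eu]]
      ring
    rcases eq_or_lt_of_le ha with rfl | ha1
    · rw [Gb_self (n+1), Nat.sub_self, show Eu R 0 = 1 by simp [Eu]]
      ring
    obtain ⟨b, rfl⟩ : ∃ b, a = b + 1 := ⟨a-1, by omega⟩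
    set c : ℕ := n - (b+1) with hc
    have hb : b + 1 ≤ n := by omega
    have hnb : n - b = c + 1 := by omega
    have IH1 := ih b (by omega)
    have IH2 := ih (b+1) hb
    rw [hnb, Eu_succ c] at IH1
    rw [← hc, Eu_succ b] at IH2
    have hGb : Gb R (n+1) ((b+1:ℕ):ℤ)
        = Gb R n (b:ℤ) + X^(4*(b+1)) * Gb R n ((b+1:ℕ):ℤ) := by
      rw [show Gb R (n+1) ((b+1:ℕ):ℤ)
          = Gb R n (((b+1:ℕ):ℤ)-1) + X^(4*((b+1:ℕ):ℤ).toNat) * Gb R n ((b+1:ℕ):ℤ)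
          from rfl, show ((b+1:ℕ):ℤ)-1 = (b:ℤ) by push_cast; ring,
        show ((b+1:ℕ):ℤ).toNat = b+1 by omega]
    have h4 : (X:R⟦X⟧)^(4*(b+1)) * X^(4*(c+1)) = X^(4*(n+1)) := by
      rw [← pow_add]; congr 1; omega
    rw [hGb, show n+1-(b+1) = c+1 by omega, Eu_succ b, Eu_succ c, Eu_succ n]
    linear_combination (1 - X^(4*(b+1))) * IH1
      + X^(4*(b+1)) * (1 - X^(4*(c+1))) * IH2 - Eu R n * h4

lemma Eu_constantCoeff (t : ℕ) : constantCoeff (R := ℤ) (Eu ℤ t) = 1 := by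
  rw [Eu, map_prod]
  apply Finset.prod_eq_one
  intro j hj
  rw [map_sub, map_one, map_pow, constantCoeff_X, zero_pow (by omega), sub_zero]

lemma Eu_ne_zero (t : ℕ) : Eu ℤ t ≠ 0 := by
  intro h
  have := Eu_constantCoeff t
  rw [h, map_zero] at this
  exact zero_ne_one this

lemma Gb_symm (n a : ℕ) (h : a ≤ n) : Gb ℤ n (a:ℤ) = Gb ℤ n ((n-a : ℕ):ℤ) := by
  have h1 := Gb_mul_Eu (R := ℤ) n a h
  have h2 := Gb_mul_Eu (R := ℤ) n (n-a) (by omega)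
  rw [show n-(n-a) = a by omega, mul_comm (Eu ℤ (n-a)) (Eu ℤ a)] at h2
  exact mul_right_cancel₀ (mul_ne_zero (Eu_ne_zero a) (Eu_ne_zero (n-a))) (h1.trans h2.symm)

lemma Eu_Ico (a b : ℕ) (h : a ≤ b) :
    Eu ℤ a * ∏ j ∈ Finset.Ico a b, (1 - X^(4*(j+1))) = Eu ℤ b := by
  rw [Eu, Eu, Finset.range_eq_Ico, Finset.range_eq_Ico]
  exact Finset.prod_Ico_consecutive (fun j => (1 - (X:ℤ⟦X⟧)^(4*(j+1)))) (Nat.zero_le a) h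

lemma Eu_mul_Gb (m κ : ℕ) (hκ : κ ≤ m+1) :
    Eu ℤ (m+1) * Gb ℤ (2*m+2) ((m+1+κ:ℕ):ℤ)
      = (∏ j ∈ Finset.Ico (m+1-κ) (m+1), (1 - X^(4*(j+1))))
        * ∏ j ∈ Finset.Ico (m+1+κ) (2*m+2), (1 - X^(4*(j+1))) := by
  apply mul_left_cancel₀ (mul_ne_zero (Eu_ne_zero (m+1-κ)) (Eu_ne_zero (m+1+κ)))
  have h1 := Gb_mul_Eu (R := ℤ) (2*m+2) (m+1+κ) (by omega)
  rw [show 2*m+2-(m+1+κ) = m+1-κ by omega] at h1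
  have h2 := Eu_Ico (m+1-κ) (m+1) (by omega)
  have h3 := Eu_Ico (m+1+κ) (2*m+2) (by omega)
  calc Eu ℤ (m+1-κ) * Eu ℤ (m+1+κ) * (Eu ℤ (m+1) * Gb ℤ (2*m+2) ((m+1+κ:ℕ):ℤ))
      = Eu ℤ (m+1) * (Gb ℤ (2*m+2) ((m+1+κ:ℕ):ℤ) * (Eu ℤ (m+1+κ) * Eu ℤ (m+1-κ))) := by
        ring
    _ = Eu ℤ (m+1) * Eu ℤ (2*m+2) := by rw [h1]
    _ = _ := by rw [← h2, ← h3]; ring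

lemma coeff_prod_one (d : ℕ) (s : Finset ℕ) (h : ∀ j ∈ s, d < 4*(j+1)) :
    (coeff (R := ℤ) d) (∏ j ∈ s, (1 - (X:ℤ⟦X⟧)^(4*(j+1)))) = if d = 0 then 1 else 0 := by
  induction s using Finset.induction_on with
  | empty => simp [coeff_one]
  | insert a s' hx ih =>
    have hd := h a (Finset.mem_insert_self a s')
    rw [Finset.prod_insert hx, sub_mul, one_mul, map_sub,
      ih (fun j hj => h j (Finset.mem_insert_of_mem hj)),
      mul_comm, PowerSeries.coeff_mul_X_pow']
    rw [if_neg (show ¬(4*(a+1) ≤ d) by omega)]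
    ring

lemma key_coeff (m : ℕ) (k : ℤ) (hk : k.natAbs ≤ m+1) :
    (coeff (R := ℤ) m) (Eu ℤ (m+1) * Gb ℤ (2*m+2) ((m:ℤ)+1+k) * X^(2*k.natAbs^2))
      = if m = 2*k.natAbs^2 then 1 else 0 := by
  have hGbk : Gb ℤ (2*m+2) ((m:ℤ)+1+k) = Gb ℤ (2*m+2) ((m+1+k.natAbs:ℕ):ℤ) := by
    rcases le_or_gt 0 k with h0 | h0
    · exact congrArg (Gb ℤ (2*m+2)) (by omega)
    · have h1 : (m:ℤ)+1+k = ((m+1-k.natAbs : ℕ):ℤ) := by omega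
      rw [h1, Gb_symm (2*m+2) (m+1-k.natAbs) (by omega),
        show 2*m+2-(m+1-k.natAbs) = m+1+k.natAbs by omega]
  rw [hGbk, Eu_mul_Gb m k.natAbs hk, PowerSeries.coeff_mul_X_pow']
  by_cases hc : 2*k.natAbs^2 ≤ m
  · rw [if_pos hc]
    have hdisj : Disjoint (Finset.Ico (m+1-k.natAbs) (m+1))
        (Finset.Ico (m+1+k.natAbs) (2*m+2)) := by
      rw [Finset.disjoint_left]
      intro x hx1 hx2
      rw [Finset.mem_Ico] at hx1 hx2
      omega
    rw [← Finset.prod_union hdisj]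
    have hb : ∀ j ∈ Finset.Ico (m+1-k.natAbs) (m+1) ∪ Finset.Ico (m+1+k.natAbs) (2*m+2),
        m - 2*k.natAbs^2 < 4*(j+1) := by
      intro j hj
      rw [Finset.mem_union, Finset.mem_Ico, Finset.mem_Ico] at hj
      have h1 : k.natAbs ≤ k.natAbs^2 + 1 := by nlinarith
      generalize k.natAbs^2 = t at *
      omega
    rw [coeff_prod_one _ _ hb]
    split_ifs with h1 h2 h3 <;> first | rfl | omega
  · rw [if_neg hc, if_neg (by omega)]

/-- The "z" variable, as a constant of `(ℤ[z])⟦X⟧`. -/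
noncomputable def zz : (Polynomial ℤ)⟦X⟧ := PowerSeries.C (R := Polynomial ℤ) Polynomial.X

/-- Summand of the finite Jacobi triple product. -/
noncomputable def jterm (N : ℕ) (k : ℤ) : (Polynomial ℤ)⟦X⟧ :=
  Gb (Polynomial ℤ) (2*N) ((N:ℤ)+k) * X^(2*k.natAbs^2) * zz^(((N:ℤ)+k).toNat)

lemma jterm_zero_of_lt (N : ℕ) (k : ℤ) (h : k < -(N:ℤ)) : jterm N k = 0 := by
  rw [jterm, Gb_neg (2*N) ((N:ℤ)+k) (by omega)]
  ring

lemma jterm_zero_of_gt (N : ℕ) (k : ℤ) (h : (N:ℤ) < k) : jterm N k = 0 := by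
  rw [jterm, Gb_gt (2*N) ((N:ℤ)+k) (by omega)]
  ring


lemma exp2 (N : ℕ) (j : ℤ) (h1 : -(N:ℤ) ≤ j) (h2 : j ≤ N) :
    4*((N:ℤ)-j).toNat + 2*(j+1).natAbs^2 = 4*N+2 + 2*j.natAbs^2 := by
  have h3 : (4*(((N:ℤ)-j).toNat:ℤ) + 2*((j+1).natAbs^2:ℕ) : ℤ)
      = (4*(N:ℤ)+2 + 2*(j.natAbs^2:ℕ) : ℤ) := by
    rw [Int.toNat_of_nonneg (by omega)]
    push_cast
    rw [sq_abs, sq_abs]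
    ring
  exact_mod_cast h3

lemma exp3 (N : ℕ) (j : ℤ) (h1 : -(N:ℤ) ≤ j) (h2 : j ≤ N) :
    4*((N:ℤ)+j).toNat + 2*(j-1).natAbs^2 = 4*N+2 + 2*j.natAbs^2 := by
  have h3 : (4*(((N:ℤ)+j).toNat:ℤ) + 2*((j-1).natAbs^2:ℕ) : ℤ)
      = (4*(N:ℤ)+2 + 2*(j.natAbs^2:ℕ) : ℤ) := by
    rw [Int.toNat_of_nonneg (by omega)]
    push_cast
    rw [sq_abs, sq_abs]
    ring
  exact_mod_cast h3

theorem jtp (N : ℕ) :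
    ∏ i ∈ Finset.range N, ((1 + zz * X^(4*i+2)) * (zz + X^(4*i+2)))
      = ∑ k ∈ Finset.Icc (-(N:ℤ)) (N:ℤ), jterm N k := by
  induction N with
  | zero =>
    rw [Finset.prod_range_zero, Nat.cast_zero, neg_zero, Finset.Icc_self,
      Finset.sum_singleton, jterm]
    norm_num [Gb_zero]
  | succ N ih =>
    rw [Finset.prod_range_succ, ih]
    have hIcc : Finset.Icc (-((N+1:ℕ):ℤ)) ((N+1:ℕ):ℤ)
        = Finset.Icc (-(N:ℤ)-1) ((N:ℤ)+1) := by
      congr 1 <;> push_cast <;> ring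
    -- the three partial sums
    have hsub : Finset.Icc (-(N:ℤ)) (N:ℤ) ⊆ Finset.Icc (-(N:ℤ)-1) ((N:ℤ)+1) := by
      apply Finset.Icc_subset_Icc <;> omega
    have hdag : ∀ k ∈ Finset.Icc (-(N:ℤ)-1) ((N:ℤ)+1),
        jterm (N+1) k
          = (Gb (Polynomial ℤ) (2*N) ((N:ℤ)+k) * (1 + X^(8*N+4))
              + X^(4*((N:ℤ)+1-k).toNat) * Gb (Polynomial ℤ) (2*N) ((N:ℤ)+k-1)
              + X^(4*((N:ℤ)+1+k).toNat) * Gb (Polynomial ℤ) (2*N) ((N:ℤ)+1+k))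
            * X^(2*k.natAbs^2) * zz^((((N+1:ℕ):ℤ)+k).toNat) := by
      intro k hk
      rw [Finset.mem_Icc] at hk
      rw [jterm, show 2*(N+1) = 2*N+2 by ring,
        show ((N+1:ℕ):ℤ)+k = (N:ℤ)+1+k by push_cast; ring,
        Gb_dagger N k (by omega) (by omega)]
    rw [hIcc, Finset.sum_congr rfl hdag]
    have split : ∀ k : ℤ,
        (Gb (Polynomial ℤ) (2*N) ((N:ℤ)+k) * (1 + X^(8*N+4))
            + X^(4*((N:ℤ)+1-k).toNat) * Gb (Polynomial ℤ) (2*N) ((N:ℤ)+k-1)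
            + X^(4*((N:ℤ)+1+k).toNat) * Gb (Polynomial ℤ) (2*N) ((N:ℤ)+1+k))
          * X^(2*k.natAbs^2) * zz^((((N+1:ℕ):ℤ)+k).toNat)
        = Gb (Polynomial ℤ) (2*N) ((N:ℤ)+k) * (1 + X^(8*N+4)) * X^(2*k.natAbs^2)
              * zz^((((N+1:ℕ):ℤ)+k).toNat)
          + X^(4*((N:ℤ)+1-k).toNat) * Gb (Polynomial ℤ) (2*N) ((N:ℤ)+k-1)
              * X^(2*k.natAbs^2) * zz^((((N+1:ℕ):ℤ)+k).toNat)
          + X^(4*((N:ℤ)+1+k).toNat) * Gb (Polynomial ℤ) (2*N) ((N:ℤ)+1+k)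
              * X^(2*k.natAbs^2) * zz^((((N+1:ℕ):ℤ)+k).toNat) := by
      intro k; ring
    rw [Finset.sum_congr rfl (fun k _ => split k), Finset.sum_add_distrib,
      Finset.sum_add_distrib]
    have hS1 : ∑ k ∈ Finset.Icc (-(N:ℤ)-1) ((N:ℤ)+1),
        Gb (Polynomial ℤ) (2*N) ((N:ℤ)+k) * (1 + X^(8*N+4)) * X^(2*k.natAbs^2)
          * zz^((((N+1:ℕ):ℤ)+k).toNat)
        = (1 + X^(8*N+4)) * zz * ∑ k ∈ Finset.Icc (-(N:ℤ)) (N:ℤ), jterm N k := by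
      rw [Finset.mul_sum, ← Finset.sum_subset hsub (by
        intro x hx1 hx2
        rw [Finset.mem_Icc] at hx1
        rw [Finset.mem_Icc, not_and_or] at hx2
        rcases hx2 with h | h
        · rw [Gb_neg (2*N) ((N:ℤ)+x) (by omega)]; ring
        · rw [Gb_gt (2*N) ((N:ℤ)+x) (by omega)]; ring)]
      apply Finset.sum_congr rfl
      intro k hk
      rw [Finset.mem_Icc] at hk
      rw [jterm, show (((N+1:ℕ):ℤ)+k).toNat = ((N:ℤ)+k).toNat + 1 by omega, pow_succ]
      ring
    have hS2 : ∑ k ∈ Finset.Icc (-(N:ℤ)-1) ((N:ℤ)+1),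
        X^(4*((N:ℤ)+1-k).toNat) * Gb (Polynomial ℤ) (2*N) ((N:ℤ)+k-1) * X^(2*k.natAbs^2)
          * zz^((((N+1:ℕ):ℤ)+k).toNat)
        = X^(4*N+2) * zz^2 * ∑ k ∈ Finset.Icc (-(N:ℤ)) (N:ℤ), jterm N k := by
      have hmap : Finset.Icc (-(N:ℤ)-1) ((N:ℤ)+1)
          = (Finset.Icc (-(N:ℤ)-2) (N:ℤ)).map (addRightEmbedding 1) := by
        rw [Finset.map_add_right_Icc]
        congr 1 <;> ring
      rw [hmap, Finset.sum_map]
      simp only [addRightEmbedding_apply]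
      have hsub2 : Finset.Icc (-(N:ℤ)) (N:ℤ) ⊆ Finset.Icc (-(N:ℤ)-2) (N:ℤ) :=
        Finset.Icc_subset_Icc (by omega) (by omega)
      rw [Finset.mul_sum, ← Finset.sum_subset hsub2 (by
        intro x hx1 hx2
        rw [Finset.mem_Icc] at hx1
        rw [Finset.mem_Icc, not_and_or] at hx2
        rcases hx2 with h | h
        · rw [show (N:ℤ)+(x+1)-1 = (N:ℤ)+x by ring,
            Gb_neg (2*N) ((N:ℤ)+x) (by omega)]; ring
        · omega)]
      apply Finset.sum_congr rfl
      intro j hj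
      rw [Finset.mem_Icc] at hj
      rw [jterm, show (N:ℤ)+(j+1)-1 = (N:ℤ)+j by ring,
        show (((N+1:ℕ):ℤ)+(j+1)).toNat = ((N:ℤ)+j).toNat + 2 by omega,
        show (N:ℤ)+1-(j+1) = (N:ℤ)-j by ring]
      calc X^(4*((N:ℤ)-j).toNat) * Gb (Polynomial ℤ) (2*N) ((N:ℤ)+j) * X^(2*(j+1).natAbs^2)
            * zz^(((N:ℤ)+j).toNat + 2)
          = Gb (Polynomial ℤ) (2*N) ((N:ℤ)+j)
              * X^(4*((N:ℤ)-j).toNat + 2*(j+1).natAbs^2) * zz^(((N:ℤ)+j).toNat + 2) := by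
            rw [pow_add]; ring
        _ = _ := by
            rw [exp2 N j hj.1 hj.2, pow_add, pow_add, pow_add]; ring
    have hS3 : ∑ k ∈ Finset.Icc (-(N:ℤ)-1) ((N:ℤ)+1),
        X^(4*((N:ℤ)+1+k).toNat) * Gb (Polynomial ℤ) (2*N) ((N:ℤ)+1+k) * X^(2*k.natAbs^2)
          * zz^((((N+1:ℕ):ℤ)+k).toNat)
        = X^(4*N+2) * ∑ k ∈ Finset.Icc (-(N:ℤ)) (N:ℤ), jterm N k := by
      have hmap : Finset.Icc (-(N:ℤ)-1) ((N:ℤ)+1)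
          = (Finset.Icc (-(N:ℤ)) ((N:ℤ)+2)).map (addRightEmbedding (-1)) := by
        rw [Finset.map_add_right_Icc]
        congr 1 <;> ring
      rw [hmap, Finset.sum_map]
      simp only [addRightEmbedding_apply]
      have hsub3 : Finset.Icc (-(N:ℤ)) (N:ℤ) ⊆ Finset.Icc (-(N:ℤ)) ((N:ℤ)+2) :=
        Finset.Icc_subset_Icc (by omega) (by omega)
      rw [Finset.mul_sum, ← Finset.sum_subset hsub3 (by
        intro x hx1 hx2
        rw [Finset.mem_Icc] at hx1
        rw [Finset.mem_Icc, not_and_or] at hx2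
        rcases hx2 with h | h
        · omega
        · rw [show (N:ℤ)+1+(x+-1) = (N:ℤ)+x by ring,
            Gb_gt (2*N) ((N:ℤ)+x) (by omega)]; ring)]
      apply Finset.sum_congr rfl
      intro j hj
      rw [Finset.mem_Icc] at hj
      rw [jterm, show (N:ℤ)+1+(j+-1) = (N:ℤ)+j by ring,
        show (((N+1:ℕ):ℤ)+(j+-1)).toNat = ((N:ℤ)+j).toNat by omega,
        show (j+-1) = (j-1) by ring]
      calc X^(4*((N:ℤ)+j).toNat) * Gb (Polynomial ℤ) (2*N) ((N:ℤ)+j) * X^(2*(j-1).natAbs^2)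
            * zz^(((N:ℤ)+j).toNat)
          = Gb (Polynomial ℤ) (2*N) ((N:ℤ)+j)
              * X^(4*((N:ℤ)+j).toNat + 2*(j-1).natAbs^2) * zz^(((N:ℤ)+j).toNat) := by
            rw [pow_add]; ring
        _ = _ := by
            rw [exp3 N j hj.1 hj.2, pow_add]; ring
    rw [hS1, hS2, hS3]
    ring

lemma phi_Gb (n : ℕ) : ∀ k : ℤ,
    PowerSeries.map (Polynomial.evalRingHom (-1:ℤ)) (Gb (Polynomial ℤ) n k) = Gb ℤ n k := by
  induction n with
  | zero =>
    intro k
    by_cases h : k = 0 <;> simp [Gb, h]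
  | succ n ih =>
    intro k
    rw [show Gb (Polynomial ℤ) (n+1) k
        = Gb (Polynomial ℤ) n (k-1) + X^(4*k.toNat) * Gb (Polynomial ℤ) n k from rfl,
      map_add, map_mul, map_pow, PowerSeries.map_X, ih, ih]
    rfl

lemma phi_zz : PowerSeries.map (Polynomial.evalRingHom (-1:ℤ)) zz = -1 := by
  rw [zz, PowerSeries.map_C]
  simp

lemma negpow (a b : ℕ) (h : a % 2 = b % 2) : (-1 : ℤ⟦X⟧)^a = (-1)^b := by
  rcases Nat.even_or_odd a with he | ho
  · have ha := Nat.even_iff.1 he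
    rw [he.neg_one_pow, (Nat.even_iff.2 (by omega)).neg_one_pow]
  · have ha := Nat.odd_iff.1 ho
    rw [ho.neg_one_pow, (Nat.odd_iff.2 (by omega)).neg_one_pow]

lemma gauss_fin (N : ℕ) :
    ∏ i ∈ Finset.range N, (1 - (X:ℤ⟦X⟧)^(4*i+2))^2
      = ∑ k ∈ Finset.Icc (-(N:ℤ)) (N:ℤ),
          (-1:ℤ⟦X⟧)^k.natAbs * (Gb ℤ (2*N) ((N:ℤ)+k) * X^(2*k.natAbs^2)) := by
  have h := congrArg (PowerSeries.map (Polynomial.evalRingHom (-1:ℤ))) (jtp N)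
  simp only [jterm, map_prod, map_sum, map_mul, map_add, map_one, map_pow,
    PowerSeries.map_X, phi_zz, phi_Gb] at h
  have hfac : ∀ i : ℕ, ((1 + (-1) * X^(4*i+2) : ℤ⟦X⟧) * ((-1) + X^(4*i+2)))
      = (-1) * ((1 - X^(4*i+2))^2) := by intro i; ring
  rw [Finset.prod_congr rfl (fun i _ => hfac i), Finset.prod_mul_distrib,
    Finset.prod_const, Finset.card_range] at h
  have hsq : (-1:ℤ⟦X⟧)^N * (-1)^N = 1 := by rw [← mul_pow]; norm_num
  calc ∏ i ∈ Finset.range N, (1 - (X:ℤ⟦X⟧)^(4*i+2))^2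
      = ((-1:ℤ⟦X⟧)^N * (-1)^N) * ∏ i ∈ Finset.range N, (1 - (X:ℤ⟦X⟧)^(4*i+2))^2 := by
        rw [hsq, one_mul]
    _ = (-1:ℤ⟦X⟧)^N * ∑ k ∈ Finset.Icc (-(N:ℤ)) (N:ℤ),
          Gb ℤ (2*N) ((N:ℤ)+k) * X^(2*k.natAbs^2) * (-1)^(((N:ℤ)+k).toNat) := by
        rw [mul_assoc, h]
    _ = _ := by
        rw [Finset.mul_sum]
        apply Finset.sum_congr rfl
        intro k hk
        rw [Finset.mem_Icc] at hk
        have hp : (-1:ℤ⟦X⟧)^N * (-1)^(((N:ℤ)+k).toNat) = (-1)^k.natAbs := by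
          rw [← pow_add]
          exact negpow _ _ (by omega)
        calc (-1:ℤ⟦X⟧)^N * (Gb ℤ (2*N) ((N:ℤ)+k) * X^(2*k.natAbs^2) * (-1)^(((N:ℤ)+k).toNat))
            = ((-1:ℤ⟦X⟧)^N * (-1)^(((N:ℤ)+k).toNat))
                * (Gb ℤ (2*N) ((N:ℤ)+k) * X^(2*k.natAbs^2)) := by ring
          _ = _ := by rw [hp]

/-- `(q^4;q^4)_∞ (q^2;q^4)_∞^2 = ∑_{n∈ℤ} (-1)^n q^{2n^2}`, stated coefficientwise:
the `m`-th coefficient of each side is already attained by the partial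
products/sums shown. -/
theorem stmt7 (m : ℕ) :
    PowerSeries.coeff (R := ℤ) m
      ((∏ k ∈ Finset.range (m + 1), (1 - (X : ℤ⟦X⟧) ^ (4 * (k + 1)))) *
        (∏ k ∈ Finset.range (m + 1), (1 - (X : ℤ⟦X⟧) ^ (4 * k + 2))) ^ 2) =
    PowerSeries.coeff (R := ℤ) m
      (∑ n ∈ Finset.Icc (-(m : ℤ)) (m : ℤ),
        (-1 : ℤ⟦X⟧) ^ n.natAbs * (X : ℤ⟦X⟧) ^ (2 * n.natAbs ^ 2)) := by
  have hC : ∀ a : ℕ, (-1 : ℤ⟦X⟧)^a = C (R := ℤ) ((-1:ℤ)^a) := by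
    intro a
    rw [map_pow, map_neg, map_one]
  have hL : PowerSeries.coeff (R := ℤ) m
      ((∏ k ∈ Finset.range (m + 1), (1 - (X : ℤ⟦X⟧) ^ (4 * (k + 1)))) *
        (∏ k ∈ Finset.range (m + 1), (1 - (X : ℤ⟦X⟧) ^ (4 * k + 2))) ^ 2)
      = ∑ k ∈ Finset.Icc (-(m:ℤ)-1) ((m:ℤ)+1),
          ((-1:ℤ)^k.natAbs * if m = 2*k.natAbs^2 then 1 else 0) := by
    have hIcc' : Finset.Icc (-((m+1:ℕ):ℤ)) ((m+1:ℕ):ℤ)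
        = Finset.Icc (-(m:ℤ)-1) ((m:ℤ)+1) := by
      congr 1 <;> push_cast <;> ring
    rw [show (∏ k ∈ Finset.range (m + 1), (1 - (X : ℤ⟦X⟧) ^ (4 * (k + 1))))
        = Eu ℤ (m+1) from rfl, ← Finset.prod_pow, gauss_fin (m+1), hIcc',
      Finset.mul_sum, map_sum]
    apply Finset.sum_congr rfl
    intro k hk
    rw [Finset.mem_Icc] at hk
    rw [show (2*(m+1)) = 2*m+2 by ring,
      show ((m+1:ℕ):ℤ)+k = (m:ℤ)+1+k by push_cast; ring, hC,
      show Eu ℤ (m+1) * (C (R := ℤ) ((-1:ℤ)^k.natAbs)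
            * (Gb ℤ (2*m+2) ((m:ℤ)+1+k) * X^(2*k.natAbs^2)))
          = C (R := ℤ) ((-1:ℤ)^k.natAbs)
            * (Eu ℤ (m+1) * Gb ℤ (2*m+2) ((m:ℤ)+1+k) * X^(2*k.natAbs^2)) by ring,
      PowerSeries.coeff_C_mul, key_coeff m k (by omega)]
  have hR : PowerSeries.coeff (R := ℤ) m
      (∑ n ∈ Finset.Icc (-(m : ℤ)) (m : ℤ),
        (-1 : ℤ⟦X⟧) ^ n.natAbs * (X : ℤ⟦X⟧) ^ (2 * n.natAbs ^ 2))
      = ∑ k ∈ Finset.Icc (-(m:ℤ)) ((m:ℤ)),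
          ((-1:ℤ)^k.natAbs * if m = 2*k.natAbs^2 then 1 else 0) := by
    rw [map_sum]
    apply Finset.sum_congr rfl
    intro k hk
    rw [hC, PowerSeries.coeff_C_mul, PowerSeries.coeff_X_pow]
  rw [hL, hR]
  refine (Finset.sum_subset (Finset.Icc_subset_Icc (by omega) (by omega)) ?_).symm
  intro x hx1 hx2
  rw [Finset.mem_Icc] at hx1
  rw [Finset.mem_Icc, not_and_or] at hx2
  have habs : x.natAbs = m+1 := by omega
  have hlt : m < 2*(m+1)^2 := by nlinarith
  rw [habs, if_neg (Nat.ne_of_lt hlt), mul_zero]
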